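/- Telescoping jump formula for ENO interpolation: with the setup of ENO interpolation (point values v_i, stencil offsets r̃_p for point x_0 and ñ_p for point x_1, with r̃_p ≤ ñ_p), the midpoint jump satisfies v⁺_{1/2} − v⁻_{1/2} = Σ_{r=r̃_p}^{ñ_p} v[x_r,...,x_{r+p}] · (x_{r+p} − x_r) · Π_{m=1}^{p−1} (x_{1/2} − x_{r+m}), where x_{1/2} = (x_0 + x_1)/2. -/

import Mathlib

/-- Divided differences of the data `V` at the points `x`:
`dd x V j i = V[x_i, ..., x_{i+j}]`. -/
noncomputable def dd (x V : ℤ → ℝ) : ℕ → ℤ → ℝ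
  | 0, i => V i
  | j + 1, i => (dd x V j (i + 1) - dd x V j i) / (x (i + (j : ℤ) + 1) - x i)

/-- ENO interpolation stencil offsets for the grid point `x_i`:
`enoOffsetI x v i j` is the left offset `r_j` of the `j`-point stencil
`{x_{i+r_j}, ..., x_{i+r_j+j-1}}` chosen by the ENO selection procedure applied to
point values `v` at points `x`. -/
noncomputable def enoOffsetI (x v : ℤ → ℝ) (i : ℤ) : ℕ → ℤ
  | 0 => 0
  | 1 => 0
  | j + 2 =>
    let r := enoOffsetI x v i (j + 1)
    if |dd x v (j + 1) (i + r - 1)| < |dd x v (j + 1) (i + r)| then r - 1 else r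

open Polynomial Finset

namespace ENO17

noncomputable def P (x v : ℤ → ℝ) (a b : ℤ) : ℝ[X] :=
  Lagrange.interpolate (Finset.Icc a b) x v

lemma P_def (x v : ℤ → ℝ) (a b : ℤ) : P x v a b = Lagrange.interpolate (Finset.Icc a b) x v := rfl

variable {x v : ℤ → ℝ} (hx : StrictMono x)

lemma card_Icc_int (i : ℤ) (j : ℕ) : #(Finset.Icc i (i + (j : ℤ))) = j + 1 := by
  rw [Int.card_Icc]; omega

include hx

lemma injOn_x (s : Finset ℤ) : Set.InjOn x s := hx.injective.injOn

lemma degP_lt (i : ℤ) (j : ℕ) : (P x v i (i + (j : ℤ))).degree < ((j + 1 : ℕ) : WithBot ℕ) := by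
  have h := Lagrange.degree_interpolate_lt (v := x) v (injOn_x hx (Finset.Icc i (i + (j : ℤ))))
  rw [card_Icc_int] at h
  exact_mod_cast h

lemma degP_le (i : ℤ) (j : ℕ) : (P x v i (i + (j : ℤ))).degree ≤ (j : ℕ) := by
  have h := degP_lt (v := v) hx i j
  rw [degree_lt_iff_coeff_zero] at h
  rw [degree_le_iff_coeff_zero]
  intro m hm
  have : (j : ℕ) < m := by exact_mod_cast hm
  exact h m (by omega)

lemma coeffP_zero (i : ℤ) (j : ℕ) {m : ℕ} (hm : j < m) : (P x v i (i + (j : ℤ))).coeff m = 0 := by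
  have h := degP_lt (v := v) hx i j
  rw [degree_lt_iff_coeff_zero] at h
  exact h m (by omega)

lemma evalP (i : ℤ) (j : ℕ) {k : ℤ} (hk : k ∈ Finset.Icc i (i + (j : ℤ))) :
    (P x v i (i + (j : ℤ))).eval (x k) = v k :=
  Lagrange.eval_interpolate_at_node _ (injOn_x hx _) hk

end ENO17

namespace ENO17
variable {x v : ℤ → ℝ} (hx : StrictMono x)
include hx

lemma neville (i : ℤ) (j : ℕ) :
    (x (i + (j : ℤ) + 1) - x i) • P x v i (i + (j : ℤ) + 1) =
      (X - C (x i)) * P x v (i + 1) (i + (j : ℤ) + 1)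
        - (X - C (x (i + (j : ℤ) + 1))) * P x v i (i + (j : ℤ)) := by
  set b : ℤ := i + (j : ℤ) + 1 with hb
  have hlt : x i < x b := hx (by omega)
  have hne : x b - x i ≠ 0 := sub_ne_zero.mpr (ne_of_gt hlt)
  set f : ℝ[X] := (X - C (x i)) * P x v (i + 1) (i + (j : ℤ) + 1)
        - (X - C (x (i + (j : ℤ) + 1))) * P x v i (i + (j : ℤ)) with hf
  have hd1 : ((X - C (x i)) * P x v (i + 1) (i + (j : ℤ) + 1)).degree ≤ ((j + 1 : ℕ) : WithBot ℕ) := by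
    rw [degree_mul, degree_X_sub_C]
    have : (i : ℤ) + (j : ℤ) + 1 = (i + 1) + (j : ℤ) := by ring
    rw [this]
    have := degP_le (v := v) hx (i + 1) j
    calc 1 + (P x v (i + 1) (i + 1 + (j : ℤ))).degree ≤ 1 + (j : ℕ) := add_le_add_right this 1
      _ = ((j + 1 : ℕ) : WithBot ℕ) := by push_cast; ring
  have hd2 : ((X - C (x b)) * P x v i (i + (j : ℤ))).degree ≤ ((j + 1 : ℕ) : WithBot ℕ) := by
    rw [degree_mul, degree_X_sub_C]
    have := degP_le (v := v) hx i j
    calc 1 + (P x v i (i + (j : ℤ))).degree ≤ 1 + (j : ℕ) := add_le_add_right this 1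
      _ = ((j + 1 : ℕ) : WithBot ℕ) := by push_cast; ring
  have hdegf : f.degree ≤ ((j + 1 : ℕ) : WithBot ℕ) := le_trans (degree_sub_le _ _) (max_le hd1 hd2)
  have hb' : b = i + ((j + 1 : ℕ) : ℤ) := by push_cast; omega
  have key : (x b - x i)⁻¹ • f = P x v i b := by
    rw [P_def, hb']
    refine Lagrange.eq_interpolate_of_eval_eq (s := Finset.Icc i (i + ((j + 1 : ℕ) : ℤ))) (v := x) (r := v) (injOn_x hx _) ?_ ?_
    · rw [card_Icc_int]
      refine lt_of_le_of_lt (le_trans (degree_smul_le _ _) hdegf) ?_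
      exact_mod_cast Nat.lt_succ_self (j + 1)
    · intro k hk
      rw [← hb'] at hk
      rw [mem_Icc] at hk
      have hsmul : ∀ y : ℝ, f.eval y = (y - x i) * (P x v (i + 1) (i + (j : ℤ) + 1)).eval y
          - (y - x b) * (P x v i (i + (j : ℤ))).eval y := by
        intro y; simp [hf, ← hb]
      rw [eval_smul, smul_eq_mul, hsmul]
      have harg : i + (j : ℤ) + 1 = (i + 1) + (j : ℤ) := by ring
      rcases eq_or_lt_of_le hk.1 with rfl | hik
      · have e0 : (P x v i (i + (j : ℤ))).eval (x i) = v i :=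
          evalP hx i j (by rw [mem_Icc]; omega)
        rw [e0]
        have hr : (x i - x i) * (P x v (i + 1) (i + (j : ℤ) + 1)).eval (x i)
            - (x i - x b) * v i = (x b - x i) * v i := by ring
        rw [hr, ← hb', inv_mul_cancel_left₀ hne]
      · by_cases hkb : k = b
        · subst hkb
          have e1 : (P x v (i + 1) ((i + 1) + (j : ℤ))).eval (x b) = v b :=
            evalP hx (i + 1) j (by rw [mem_Icc]; omega)
          rw [harg, e1]
          have hr : (x b - x i) * v b - (x b - x b) * (P x v i (i + (j : ℤ))).eval (x b)
              = (x b - x i) * v b := by ring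
          rw [hr, ← hb', inv_mul_cancel_left₀ hne]
        · have e1 : (P x v (i + 1) ((i + 1) + (j : ℤ))).eval (x k) = v k :=
            evalP hx (i + 1) j (by rw [mem_Icc]; omega)
          have e0 : (P x v i (i + (j : ℤ))).eval (x k) = v k :=
            evalP hx i j (by rw [mem_Icc]; omega)
          rw [harg, e1, e0]
          have hr : (x k - x i) * v k - (x k - x b) * v k = (x b - x i) * v k := by ring
          rw [hr, ← hb', inv_mul_cancel_left₀ hne]
  calc (x b - x i) • P x v i b = (x b - x i) • ((x b - x i)⁻¹ • f) := by rw [key]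
    _ = f := by rw [smul_smul, mul_inv_cancel₀ hne, one_smul]

end ENO17

namespace ENO17
variable {x v : ℤ → ℝ} (hx : StrictMono x)
include hx

lemma coeff_top (j : ℕ) : ∀ i : ℤ, (P x v i (i + (j : ℤ))).coeff j = dd x v j i := by
  induction j with
  | zero =>
    intro i
    simp only [Nat.cast_zero, add_zero, P_def, Finset.Icc_self, Lagrange.interpolate_singleton]
    rw [coeff_C_zero]
    rfl
  | succ j ih =>
    intro i
    have hnev := neville (v := v) hx i j
    have hcast : i + ((j + 1 : ℕ) : ℤ) = i + (j : ℤ) + 1 := by push_cast; ring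
    have hne : x (i + (j : ℤ) + 1) - x i ≠ 0 :=
      sub_ne_zero.mpr (ne_of_gt (hx (by omega)))
    have expand : ∀ (a : ℝ) (Q : ℝ[X]), Q.degree ≤ (j : ℕ) →
        ((X - C a) * Q).coeff (j + 1) = Q.coeff j := by
      intro a Q hQ
      have hz : Q.coeff (j + 1) = 0 :=
        coeff_eq_zero_of_degree_lt (lt_of_le_of_lt hQ
          (by exact_mod_cast lt_add_one j : ((j : ℕ) : WithBot ℕ) < ((j + 1 : ℕ) : WithBot ℕ)))
      rw [sub_mul, coeff_sub, coeff_X_mul, coeff_C_mul, hz, mul_zero, sub_zero]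
    have harg : i + (j : ℤ) + 1 = (i + 1) + (j : ℤ) := by ring
    have h1 : ((X - C (x i)) * P x v (i + 1) (i + (j : ℤ) + 1)).coeff (j + 1)
        = dd x v j (i + 1) := by
      rw [harg, expand _ _ (degP_le hx (i + 1) j), ih (i + 1)]
    have h2 : ((X - C (x (i + (j : ℤ) + 1))) * P x v i (i + (j : ℤ))).coeff (j + 1)
        = dd x v j i := by
      rw [expand _ _ (degP_le hx i j), ih i]
    have hc := congrArg (fun q : ℝ[X] => q.coeff (j + 1)) hnev
    simp only [coeff_smul, smul_eq_mul, coeff_sub] at hc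
    rw [h1, h2] at hc
    rw [hcast,
      show dd x v (j + 1) i = (dd x v j (i + 1) - dd x v j i) / (x (i + (j : ℤ) + 1) - x i) from rfl,
      eq_div_iff hne]
    linear_combination hc

end ENO17

namespace ENO17
variable {x v : ℤ → ℝ} (hx : StrictMono x)
include hx

lemma diff_factor (i : ℤ) (j : ℕ) (s : Finset ℤ)
    (hs : s ⊆ Finset.Icc i (i + (j : ℤ) + 1)) (hcard : #s = j + 1) :
    P x v i (i + (j : ℤ) + 1) - Lagrange.interpolate s x v =
      C (dd x v (j + 1) i) * ∏ m ∈ s, (X - C (x m)) := by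
  have hcast : i + ((j + 1 : ℕ) : ℤ) = i + (j : ℤ) + 1 := by push_cast; ring
  set N : ℝ[X] := ∏ m ∈ s, (X - C (x m)) with hN
  have hNmonic : N.Monic := monic_prod_of_monic s _ (fun m _ => monic_X_sub_C (x m))
  have hNdeg : N.natDegree = j + 1 := by
    rw [hN, natDegree_prod _ _ (fun m _ => X_sub_C_ne_zero (x m))]
    simp [natDegree_X_sub_C, hcard]
  have hNtop : N.coeff (j + 1) = 1 := by
    rw [← hNdeg]; exact hNmonic.coeff_natDegree
  have hNhigh : ∀ m : ℕ, j + 1 < m → N.coeff m = 0 := fun m hm =>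
    coeff_eq_zero_of_natDegree_lt (by omega)
  set c : ℝ := dd x v (j + 1) i with hc
  set Q : ℝ[X] := P x v i (i + (j : ℤ) + 1) - Lagrange.interpolate s x v - C c * N with hQ
  have hQ0 : Q = 0 := by
    refine Polynomial.eq_zero_of_degree_lt_of_eval_index_eq_zero (v := x) s (injOn_x hx s) ?_ ?_
    · rw [hcard, degree_lt_iff_coeff_zero]
      intro m hm
      have hm' : j + 1 ≤ m := by exact_mod_cast hm
      have hIcoeff : (Lagrange.interpolate s x v).coeff m = 0 := by
        apply coeff_eq_zero_of_degree_lt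
        refine lt_of_lt_of_le (Lagrange.degree_interpolate_lt (v := x) v (injOn_x hx s)) ?_
        rw [hcard]; exact_mod_cast hm'
      have hPc : (P x v i (i + (j : ℤ) + 1)).coeff m = N.coeff m * c := by
        rcases eq_or_lt_of_le hm' with rfl | hlt
        · rw [hNtop, one_mul, hc, ← coeff_top hx (j + 1) i, hcast]
        · rw [hNhigh m hlt, zero_mul, ← hcast]
          exact coeffP_zero hx i (j + 1) hlt
      rw [hQ, coeff_sub, coeff_sub, hIcoeff, coeff_C_mul, hPc]
      ring
    · intro k hk
      have hNeval : N.eval (x k) = 0 := by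
        rw [hN, eval_prod]
        exact Finset.prod_eq_zero hk (by simp)
      have hPeval : (P x v i (i + (j : ℤ) + 1)).eval (x k) = v k := by
        rw [← hcast]; exact evalP hx i (j + 1) (by rw [hcast]; exact hs hk)
      have hIeval : (Lagrange.interpolate s x v).eval (x k) = v k :=
        Lagrange.eval_interpolate_at_node _ (injOn_x hx s) hk
      rw [hQ, eval_sub, eval_sub, eval_mul, hPeval, hIeval, hNeval]
      simp
  have h2 : P x v i (i + (j : ℤ) + 1) - Lagrange.interpolate s x v - C c * N = 0 := hQ0
  linear_combination h2

lemma step (r : ℤ) (j : ℕ) (y : ℝ) :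
    (P x v (r + 1) (r + (j : ℤ) + 1)).eval y - (P x v r (r + (j : ℤ))).eval y =
      dd x v (j + 1) r * (x (r + (j : ℤ) + 1) - x r) *
        ∏ m ∈ Finset.Icc (r + 1) (r + (j : ℤ)), (y - x m) := by
  have hA := diff_factor (v := v) hx r j (Finset.Icc r (r + (j : ℤ)))
    (Finset.Icc_subset_Icc le_rfl (by omega)) (by rw [Int.card_Icc]; omega)
  have hB := diff_factor (v := v) hx r j (Finset.Icc (r + 1) (r + (j : ℤ) + 1))
    (Finset.Icc_subset_Icc (by omega) le_rfl) (by rw [Int.card_Icc]; omega)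
  rw [← P_def] at hB
  have hs0 : Finset.Icc r (r + (j : ℤ)) = insert r (Finset.Icc (r + 1) (r + (j : ℤ))) := by
    ext a; simp only [mem_Icc, mem_insert]; omega
  have hs1 : Finset.Icc (r + 1) (r + (j : ℤ) + 1)
      = insert (r + (j : ℤ) + 1) (Finset.Icc (r + 1) (r + (j : ℤ))) := by
    ext a; simp only [mem_Icc, mem_insert]; omega
  have hmem0 : r ∉ Finset.Icc (r + 1) (r + (j : ℤ)) := by simp [mem_Icc]
  have hmem1 : r + (j : ℤ) + 1 ∉ Finset.Icc (r + 1) (r + (j : ℤ)) := by simp [mem_Icc]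
  rw [← P_def] at hA
  have hAB := congrArg (fun q : ℝ[X] => q.eval y) (congrArg₂ (· - ·) hA hB)
  simp only [eval_sub, eval_mul, eval_C, eval_prod, eval_X] at hAB
  have hprod0 : ∏ m ∈ Finset.Icc r (r + (j : ℤ)), (y - x m)
      = (y - x r) * ∏ m ∈ Finset.Icc (r + 1) (r + (j : ℤ)), (y - x m) := by
    rw [hs0, Finset.prod_insert hmem0]
  have hprod1 : ∏ m ∈ Finset.Icc (r + 1) (r + (j : ℤ) + 1), (y - x m)
      = (y - x (r + (j : ℤ) + 1)) * ∏ m ∈ Finset.Icc (r + 1) (r + (j : ℤ)), (y - x m) := by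
    rw [hs1, Finset.prod_insert hmem1]
  rw [hprod0, hprod1] at hAB
  have : (P x v (r + 1) (r + (j : ℤ) + 1)).eval y - (P x v r (r + (j : ℤ))).eval y
      = dd x v (j + 1) r * ((y - x r) * ∏ m ∈ Finset.Icc (r + 1) (r + (j : ℤ)), (y - x m))
        - dd x v (j + 1) r * ((y - x (r + (j : ℤ) + 1)) *
            ∏ m ∈ Finset.Icc (r + 1) (r + (j : ℤ)), (y - x m)) := by
    linarith [hAB]
  rw [this]; ring

omit hx

lemma reindex (r : ℤ) (j : ℕ) (y : ℝ) :
    ∏ m ∈ Finset.Icc (1 : ℕ) j, (y - x (r + (m : ℤ)))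
      = ∏ m ∈ Finset.Icc (r + 1) (r + (j : ℤ)), (y - x m) := by
  induction j with
  | zero => simp
  | succ j ih =>
    have hins : Finset.Icc (r + 1) (r + ((j + 1 : ℕ) : ℤ))
        = insert (r + (j : ℤ) + 1) (Finset.Icc (r + 1) (r + (j : ℤ))) := by
      ext a; simp only [mem_Icc, mem_insert]; push_cast; omega
    rw [Finset.prod_Icc_succ_top (by omega : 1 ≤ j + 1), ih, hins,
      Finset.prod_insert (by simp [mem_Icc])]
    have harg : r + ((j + 1 : ℕ) : ℤ) = r + (j : ℤ) + 1 := by push_cast; ring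
    rw [harg, mul_comm]

lemma telescope (G : ℤ → ℝ) (a : ℤ) : ∀ b, a ≤ b →
    ∑ r ∈ Finset.Icc a b, (G (r + 1) - G r) = G (b + 1) - G a := by
  refine Int.le_induction ?_ ?_
  · simp
  · intro n hn ih
    rw [show Finset.Icc a (n + 1) = insert (n + 1) (Finset.Icc a n) from by
        ext k; simp only [mem_Icc, mem_insert]; omega,
      Finset.sum_insert (by simp [mem_Icc]), ih]
    ring

end ENO17


open ENO17 in
/-- telescoping jump formula for ENO interpolation at the midpoint
`x_{1/2} = (x_0 + x_1)/2`. -/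
theorem eno_interpolation_telescoping (p : ℕ) (hp : 1 ≤ p) (x v : ℤ → ℝ)
    (hx : StrictMono x)
    (hrs : enoOffsetI x v 0 p ≤ enoOffsetI x v 1 p) :
    (Lagrange.interpolate (Finset.Icc (1 + enoOffsetI x v 1 p)
        (1 + enoOffsetI x v 1 p + ((p - 1 : ℕ) : ℤ))) x v).eval ((x 0 + x 1) / 2) -
    (Lagrange.interpolate (Finset.Icc (enoOffsetI x v 0 p)
        (enoOffsetI x v 0 p + ((p - 1 : ℕ) : ℤ))) x v).eval ((x 0 + x 1) / 2) =
      ∑ r ∈ Finset.Icc (enoOffsetI x v 0 p) (enoOffsetI x v 1 p),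
        dd x v p r * (x (r + p) - x r) *
          ∏ m ∈ Finset.Icc 1 (p - 1), ((x 0 + x 1) / 2 - x (r + m)) := by
  obtain ⟨j, rfl⟩ : ∃ j, p = j + 1 := ⟨p - 1, by omega⟩
  simp only [Nat.add_sub_cancel]
  set y : ℝ := (x 0 + x 1) / 2 with hy
  set a : ℤ := enoOffsetI x v 0 (j + 1) with ha
  set b : ℤ := enoOffsetI x v 1 (j + 1) with hb
  have key : ∀ r : ℤ,
      dd x v (j + 1) r * (x (r + ((j + 1 : ℕ) : ℤ)) - x r)
          * ∏ m ∈ Finset.Icc 1 j, (y - x (r + (m : ℤ)))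
        = (fun t : ℤ => (P x v t (t + (j : ℤ))).eval y) (r + 1)
            - (fun t : ℤ => (P x v t (t + (j : ℤ))).eval y) r := by
    intro r
    have h1 := step (v := v) hx r j y
    have e1 : r + ((j + 1 : ℕ) : ℤ) = r + (j : ℤ) + 1 := by push_cast; ring
    have e2 : (r + 1) + (j : ℤ) = r + (j : ℤ) + 1 := by ring
    simp only []
    rw [reindex, e1, e2, h1]
  rw [Finset.sum_congr rfl (fun r _ => key r),
    telescope (fun t : ℤ => (P x v t (t + (j : ℤ))).eval y) a b hrs]
  have e3 : (1 : ℤ) + b = b + 1 := by ring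
  rw [e3]
  simp only [P_def]
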